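/- Let V̄ be a 7-dimensional vector space over a field k and α ∈ Λ^3 V̄. If α = α' ∧ α'' with α' ∈ V̄ and α'' ∈ Λ^2 V̄ indecomposable (α'' not a pure wedge of two vectors modulo α'), then the multiplication map m_α : V̄ → Λ^4 V̄, v ↦ α ∧ v, has rank 6; if α = α_1 ∧ α_2 ∧ α_3 is totally decomposable with α_1, α_2, α_3 linearly independent, then m_α has rank 4. -/

import Mathlib

open Module ExteriorAlgebra

section Helpers

variable {k V : Type*} [Field k] [AddCommGroup V] [Module k V]

/-- Contraction (interior product) by a dual vector on the exterior algebra. -/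
noncomputable def DD (φ : Module.Dual k V) : ExteriorAlgebra k V →ₗ[k] ExteriorAlgebra k V :=
  CliffordAlgebra.contractLeft (Q := (0 : QuadraticForm k V)) φ

theorem Dmul (φ : Module.Dual k V) (v : V) (x : ExteriorAlgebra k V) :
    DD φ (ι k v * x) = φ v • x - ι k v * DD φ x :=
  CliffordAlgebra.contractLeft_ι_mul φ v x

theorem Dι (φ : Module.Dual k V) (v : V) : DD φ (ι k v) = algebraMap k _ (φ v) :=
  CliffordAlgebra.contractLeft_ι _ _ v

theorem Dalg (φ : Module.Dual k V) (r : k) : DD φ (algebraMap k _ r) = 0 :=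
  CliffordAlgebra.contractLeft_algebraMap _ _ r

theorem ιanti (a b : V) : ι k a * ι k b = -(ι k b * ι k a) :=
  eq_neg_of_add_eq_zero_left (ι_add_mul_swap a b)

theorem mem2 (y z : V) : ι k y * ι k z ∈ ⋀[k]^2 V := by
  rw [exteriorPower, pow_two]
  exact Submodule.mul_mem_mul (LinearMap.mem_range_self _ y) (LinearMap.mem_range_self _ z)

/-- Contraction sends `Λ²` into `Λ¹`. -/
theorem Dmem2 (φ : Module.Dual k V) {ω : ExteriorAlgebra k V} (hω : ω ∈ ⋀[k]^2 V) :
    ∃ w : V, DD φ ω = ι k w := by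
  set M : Submodule k (ExteriorAlgebra k V) := LinearMap.range (ι k : V →ₗ[k] ExteriorAlgebra k V)
  let SS : ℕ → Submodule k (ExteriorAlgebra k V) := fun n => Nat.rec ⊥ (fun j _ => M ^ j) n
  have H : ∀ n (x : ExteriorAlgebra k V), x ∈ M ^ n → DD φ x ∈ SS n := by
    intro n x hx
    refine Submodule.pow_induction_on_left' _ (C := fun n x _ => DD φ x ∈ SS n) ?_ ?_ ?_ hx
    · intro r; simpa [SS] using Dalg φ r
    · intro x y n hx hy ihx ihy; simpa [map_add] using Submodule.add_mem _ ihx ihy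
    · rintro m ⟨u, rfl⟩ i x hx ih
      rw [Dmul]
      cases i with
      | zero =>
        have ih' : DD φ x ∈ (⊥ : Submodule k (ExteriorAlgebra k V)) := ih
        rw [Submodule.mem_bot] at ih'
        show φ u • x - ι k u * DD φ x ∈ M ^ 0
        rw [ih', mul_zero, sub_zero]
        exact Submodule.smul_mem _ _ hx
      | succ j =>
        show φ u • x - ι k u * DD φ x ∈ M ^ (j + 1)
        refine Submodule.sub_mem _ (Submodule.smul_mem _ _ hx) ?_
        have h1 : ι k u * DD φ x ∈ M * M ^ j :=
          Submodule.mul_mem_mul (LinearMap.mem_range_self _ u) (ih : DD φ x ∈ M ^ j)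
        rwa [← pow_succ'] at h1
  have h2 : DD φ ω ∈ M ^ 1 := H 2 ω hω
  rw [pow_one] at h2
  obtain ⟨w, hw⟩ := h2
  exact ⟨w, hw.symm⟩

/-- Degree-two elements commute with vectors. -/
theorem comm2 {ω : ExteriorAlgebra k V} (hω : ω ∈ ⋀[k]^2 V) (v : V) :
    ω * ι k v = ι k v * ω := by
  have H : ∀ n (x : ExteriorAlgebra k V),
      x ∈ (LinearMap.range (ι k : V →ₗ[k] ExteriorAlgebra k V)) ^ n →
      ∀ v : V, x * ι k v = ((-1 : k) ^ n) • (ι k v * x) := by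
    intro n x hx
    refine Submodule.pow_induction_on_left' _
      (C := fun n x _ => ∀ v : V, x * ι k v = ((-1 : k) ^ n) • (ι k v * x)) ?_ ?_ ?_ hx
    · intro r v; simp [Algebra.commutes]
    · intro x y n hx hy ihx ihy v
      simp [add_mul, mul_add, ihx v, ihy v, smul_add]
    · rintro m ⟨u, rfl⟩ i x hx ih v
      rw [mul_assoc, ih v, pow_succ, mul_smul_comm, ← mul_assoc, ιanti u v, ← smul_smul]
      simp [mul_comm, mul_assoc]
  simpa using H 2 ω hω v

/-- A linearly independent family admits a dual family. -/
theorem exists_dual_family {n : ℕ} {f : Fin n → V} (hf : LinearIndependent k f) :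
    ∃ φ : Fin n → Module.Dual k V, ∀ i j, φ i (f j) = if i = j then 1 else 0 := by
  classical
  have hinj := hf.injective
  have hs : LinearIndepOn k id (Set.range f) := (linearIndepOn_id_range_iff hinj).mpr hf
  let B := Basis.extend hs
  have hmem : ∀ i, f i ∈ hs.extend (Set.subset_univ _) := fun i =>
    hs.subset_extend _ ⟨i, rfl⟩
  refine ⟨fun i => B.coord ⟨f i, hmem i⟩, fun i j => ?_⟩
  have hBj : B ⟨f j, hmem j⟩ = f j := Basis.extend_apply_self hs _
  rw [← hBj, Basis.coord_apply, Basis.repr_self, Finsupp.single_apply]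
  by_cases h : i = j
  · simp [h]
  · have hne : (⟨f j, hmem j⟩ : hs.extend (Set.subset_univ _)) ≠ ⟨f i, hmem i⟩ := by
      intro he
      exact h ((hinj (Subtype.mk_eq_mk.mp he)).symm)
    rw [if_neg hne, if_neg h]

end Helpers

set_option maxHeartbeats 1000000 in
theorem stmt8 {k V : Type*} [Field k] [AddCommGroup V] [Module k V]
    [FiniteDimensional k V] (h7 : finrank k V = 7) :
    (∀ (a : V) (ω : ExteriorAlgebra k V), ω ∈ ⋀[k]^2 V →
      ι k a * ω * ω ≠ 0 →
      finrank k
        ↥(LinearMap.range ((LinearMap.mulLeft k (ι k a * ω)).comp (ι k))) = 6) ∧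
    (∀ a b c : V, LinearIndependent k ![a, b, c] →
      finrank k
        ↥(LinearMap.range
            ((LinearMap.mulLeft k (ι k a * ι k b * ι k c)).comp (ι k))) = 4) := by
  constructor
  · -- Part 1
    intro a ω hω hA
    set L := (LinearMap.mulLeft k (ι k a * ω)).comp (ι k) with hLdef
    have ha0 : a ≠ 0 := by
      rintro rfl
      simp at hA
    have hker : LinearMap.ker L = Submodule.span k {a} := by
      apply le_antisymm
      · intro x hx
        rw [LinearMap.mem_ker, LinearMap.comp_apply, LinearMap.mulLeft_apply] at hx
        by_contra hxs
        obtain ⟨φ₀, hφx0, hφmap⟩ :=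
          Submodule.exists_dual_map_eq_bot_of_notMem (R := k) hxs inferInstance
        set φ : Module.Dual k V := (φ₀ x)⁻¹ • φ₀ with hφdef
        have hφx : φ x = 1 := by
          simp [hφdef, inv_mul_cancel₀ hφx0]
        have hφa : φ a = 0 := by
          have h := Submodule.mem_map_of_mem (f := φ₀)
            (Submodule.mem_span_singleton_self a)
          rw [hφmap, Submodule.mem_bot] at h
          simp [hφdef, h]
        -- rearrange hx
        have h1 : ι k x * (ι k a * ω) = 0 := by
          have hrw : ι k a * ω * ι k x = -(ι k x * (ι k a * ω)) := by
            rw [mul_assoc, comm2 hω x, ← mul_assoc, ιanti a x, neg_mul, mul_assoc]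
          rw [hrw] at hx
          exact neg_eq_zero.mp hx
        obtain ⟨w, hw⟩ := Dmem2 φ hω
        have h2 : ι k a * ω = ι k x * DD φ (ι k a * ω) := by
          have h := congrArg (DD φ) h1
          rw [map_zero, Dmul, hφx, one_smul] at h
          exact sub_eq_zero.mp h
        have h3 : DD φ (ι k a * ω) = -(ι k a * ι k w) := by
          rw [Dmul, hφa, zero_smul, hw, zero_sub]
        apply hA
        rw [← mul_assoc] at h1
        calc ι k a * ω * ω = ι k x * -(ι k a * ι k w) * ω := by rw [h2, h3]
          _ = -(ι k x * (ι k a * (ι k w * ω))) := by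
              simp only [mul_neg, neg_mul, mul_assoc]
          _ = -(ι k x * (ι k a * (ω * ι k w))) := by rw [← comm2 hω w]
          _ = -(ι k x * ι k a * ω * ι k w) := by simp only [mul_assoc]
          _ = 0 := by rw [h1, zero_mul, neg_zero]
      · rw [Submodule.span_le, Set.singleton_subset_iff, SetLike.mem_coe,
          LinearMap.mem_ker, LinearMap.comp_apply, LinearMap.mulLeft_apply]
        rw [mul_assoc, comm2 hω a, ← mul_assoc, ι_sq_zero, zero_mul]
    have hkd : finrank k (LinearMap.ker L) = 1 := by
      rw [hker]
      exact finrank_span_singleton ha0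
    have hrn := LinearMap.finrank_range_add_finrank_ker L
    rw [hkd, h7] at hrn
    omega
  · -- Part 2
    intro a b c hli
    set L := (LinearMap.mulLeft k (ι k a * ι k b * ι k c)).comp (ι k) with hLdef
    have hker : LinearMap.ker L = Submodule.span k (Set.range ![a, b, c]) := by
      apply le_antisymm
      · intro x hx
        rw [LinearMap.mem_ker, LinearMap.comp_apply, LinearMap.mulLeft_apply] at hx
        by_contra hxs
        have hli4 : LinearIndependent k ![x, a, b, c] :=
          linearIndependent_fin_cons.mpr ⟨hli, hxs⟩
        obtain ⟨φ, hφ⟩ := exists_dual_family hli4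
        have e0 : (![x, a, b, c] : Fin 4 → V) 0 = x := by simp
        have e1 : (![x, a, b, c] : Fin 4 → V) 1 = a := by simp
        have e2 : (![x, a, b, c] : Fin 4 → V) 2 = b := by simp [Matrix.cons_val_two]
        have e3 : (![x, a, b, c] : Fin 4 → V) 3 = c := by simp [Matrix.cons_val_three]
        have vx0 : φ 0 x = 1 := by have h := hφ 0 0; rw [e0] at h; simpa using h
        have va0 : φ 0 a = 0 := by have h := hφ 0 1; rw [e1] at h; simpa using h
        have vb0 : φ 0 b = 0 := by have h := hφ 0 2; rw [e2] at h; simpa using h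
        have vc0 : φ 0 c = 0 := by have h := hφ 0 3; rw [e3] at h; simpa using h
        have va3 : φ 3 a = 0 := by have h := hφ 3 1; rw [e1] at h; simpa using h
        have vb3 : φ 3 b = 0 := by have h := hφ 3 2; rw [e2] at h; simpa using h
        have vc3 : φ 3 c = 1 := by have h := hφ 3 3; rw [e3] at h; simpa using h
        have va2 : φ 2 a = 0 := by have h := hφ 2 1; rw [e1] at h; simpa using h
        have vb2 : φ 2 b = 1 := by have h := hφ 2 2; rw [e2] at h; simpa using h
        simp only [mul_assoc] at hx
        have s1 := congrArg (DD (φ 0)) hx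
        simp only [Dmul, Dι, vx0, va0, vb0, vc0, map_one, map_zero, zero_smul,
          zero_sub, mul_neg, neg_neg, mul_one, neg_eq_zero] at s1
        have s2 := congrArg (DD (φ 3)) s1
        simp only [Dmul, Dι, va3, vb3, vc3, map_one, map_zero, zero_smul,
          zero_sub, mul_neg, neg_neg, mul_one, neg_eq_zero] at s2
        have s3 := congrArg (DD (φ 2)) s2
        simp only [Dmul, Dι, va2, vb2, map_one, map_zero, zero_smul,
          zero_sub, mul_neg, neg_neg, mul_one, neg_eq_zero] at s3
        rw [ι_eq_zero_iff] at s3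
        exact hli.ne_zero 0 (by simpa using s3)
      · have mka : (ι k a * ι k b * ι k c) * ι k a = 0 := by
          rw [mul_assoc (ι k a) (ι k b), mul_assoc,
            comm2 (mem2 b c) a, ← mul_assoc, ι_sq_zero, zero_mul]
        have mkb : (ι k a * ι k b * ι k c) * ι k b = 0 := by
          have h : (ι k a * ι k b) * (ι k b * ι k c) = 0 := by
            rw [← mul_assoc, mul_assoc (ι k a), ι_sq_zero, mul_zero, zero_mul]
          rw [mul_assoc (ι k a * ι k b), ιanti c b, mul_neg, h, neg_zero]
        have mkc : (ι k a * ι k b * ι k c) * ι k c = 0 := by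
          rw [mul_assoc, ι_sq_zero, mul_zero]
        rw [Submodule.span_le]
        rintro y ⟨i, rfl⟩
        have hm : ∀ v : V, (ι k a * ι k b * ι k c) * ι k v = 0 → v ∈ LinearMap.ker L := by
          intro v hv
          rw [LinearMap.mem_ker, LinearMap.comp_apply, LinearMap.mulLeft_apply]
          exact hv
        fin_cases i
        · simpa using hm a mka
        · simpa using hm b mkb
        · simpa using hm c mkc
    have hkd : finrank k (LinearMap.ker L) = 3 := by
      rw [hker, finrank_span_eq_card hli]
      simp
    have hrn := LinearMap.finrank_range_add_finrank_ker L
    rw [hkd, h7] at hrn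
    omega
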